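/- arXiv:1708.07090 — 3 statements merged into one kernel-verified Lean document; each statement's English description precedes it below -/
import Mathlib

section
/- Let λ be a rigid B_n partition with length l, M = (l+1)/2, and symbol (α_1, …, α_M; β_1, …, β_{M−1}) in the B_n theory. Then α_{i+1} ≤ β_i for every 1 ≤ i ≤ M − 1. -/
set_option maxHeartbeats 2000000

/-- `svals μ` lists the numbers `s_k = l - k + μ_k` (`1 ≤ k ≤ l`, `l` the
length of `μ`), computed with 0-based indices: entry `k` is `(l - 1 - k) + μ_k`.
For weakly decreasing `μ` this list is strictly decreasing. -/
def svals (μ : List ℕ) : List ℕ :=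
  μ.mapIdx (fun k a => (μ.length - 1 - k) + a)

/-- The odd values `2f_1+1 < … < 2f_M+1` of `svals μ`, in increasing order. -/
def oddVals (μ : List ℕ) : List ℕ :=
  ((svals μ).filter (fun x => decide (x % 2 = 1))).reverse

/-- The even values `2g_1 < … < 2g_{M'}` of `svals μ`, in increasing order. -/
def evenVals (μ : List ℕ) : List ℕ :=
  ((svals μ).filter (fun x => decide (x % 2 = 0))).reverse

/-- The top row of the symbol of `μ`: `α_i = f_i - i + 1` where
`2f_i + 1` is the `i`-th smallest odd value of `svals μ` (0-based entry `i`
is `α_{i+1} = f_{i+1} - i`). -/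
def topRow (μ : List ℕ) : List ℕ :=
  (oddVals μ).mapIdx (fun i v => (v - 1) / 2 - i)

/-- The bottom row of the symbol of `μ`: `β_i = g_i - i + 1` where `2g_i` is
the `i`-th smallest even value of `svals μ`. -/
def botRow (μ : List ℕ) : List ℕ :=
  (evenVals μ).mapIdx (fun i v => v / 2 - i)




def run (b : ℕ) : ℕ → List ℕ
  | 0 => []
  | n+1 => (b + n) :: run b n

def cntO (t : ℕ) (s : List ℕ) : ℕ := s.countP (fun y => decide (t ≤ y ∧ y % 2 = 1))
def cntE (t : ℕ) (s : List ℕ) : ℕ := s.countP (fun y => decide (t ≤ y ∧ y % 2 = 0))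

lemma cntO_cons (t a) (s : List ℕ) :
    cntO t (a :: s) = cntO t s + (if t ≤ a ∧ a % 2 = 1 then 1 else 0) := by
  simp [cntO, List.countP_cons]

lemma cntE_cons (t a) (s : List ℕ) :
    cntE t (a :: s) = cntE t s + (if t ≤ a ∧ a % 2 = 0 then 1 else 0) := by
  simp [cntE, List.countP_cons]

lemma cntO_append (t) (s s' : List ℕ) : cntO t (s ++ s') = cntO t s + cntO t s' :=
  List.countP_append

lemma cntE_append (t) (s s' : List ℕ) : cntE t (s ++ s') = cntE t s + cntE t s' :=
  List.countP_append

lemma mem_run {y b n : ℕ} : y ∈ run b n ↔ b ≤ y ∧ y < b + n := by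
  induction n with
  | zero => simp [run]
  | succ n ih => simp [run, ih]; omega

lemma cntO_run (b n t : ℕ) : cntO t (run b n) = (b+n)/2 - (min (max t b) (b+n))/2 := by
  induction n with
  | zero => simp [run, cntO]
  | succ n ih => rw [run, cntO_cons, ih]; split <;> omega

lemma cntE_run (b n t : ℕ) : cntE t (run b n) = (b+n+1)/2 - (min (max t b) (b+n) + 1)/2 := by
  induction n with
  | zero => simp [run, cntE]
  | succ n ih => rw [run, cntE_cons, ih]; split <;> omega

lemma cntO_add_cntE (s : List ℕ) : cntO 0 s + cntE 0 s = s.length := by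
  induction s with
  | nil => rfl
  | cons a s ih =>
    rw [cntO_cons, cntE_cons]
    rcases Nat.mod_two_eq_zero_or_one a with h | h <;> simp [h] <;> omega

lemma svals_cons (a : ℕ) (μ : List ℕ) :
    svals (a :: μ) = (μ.length + a) :: svals μ := by
  unfold svals
  rw [List.mapIdx_cons]
  have h2 : (fun (i : ℕ) (x : ℕ) => ((a :: μ).length - 1 - (i + 1)) + x)
       = (fun (i : ℕ) (x : ℕ) => (μ.length - 1 - i) + x) := by
    funext i x; simp; omega
  rw [h2]
  congr 1

lemma length_svals (μ : List ℕ) : (svals μ).length = μ.length :=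
  List.length_mapIdx

lemma svals_sorted {μ : List ℕ} (hsort : μ.Pairwise (· ≥ ·)) :
    (svals μ).Pairwise (· > ·) := by
  rw [List.pairwise_iff_getElem]
  intro i j hi hj hij
  rw [length_svals] at hi hj
  have hmono := (List.pairwise_iff_getElem).1 hsort i j hi hj hij
  simp only [svals, List.getElem_mapIdx]
  simp only [ge_iff_le] at hmono
  omega

lemma mem_svals_le {μ : List ℕ} (hsort : μ.Pairwise (· ≥ ·)) :
    ∀ y ∈ svals μ, y ≤ μ.length - 1 + μ.headD 0 := by
  intro y hy
  rw [List.mem_iff_getElem] at hy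
  obtain ⟨k, hk, rfl⟩ := hy
  rw [length_svals] at hk
  simp only [svals, List.getElem_mapIdx]
  cases μ with
  | nil => simp at hk
  | cons a μ =>
    have h0 : (a :: μ)[k] ≤ a := by
      rcases Nat.eq_zero_or_pos k with rfl | hk0
      · simp
      · have := (List.pairwise_iff_getElem).1 hsort 0 k (by simp) hk hk0
        simpa using this
    simp only [List.headD_cons]
    have : (a :: μ).length = μ.length + 1 := by simp
    omega

lemma svals_rep_append : ∀ (c a : ℕ) (μ' : List ℕ),
    svals (List.replicate c a ++ μ') = run (μ'.length + a) c ++ svals μ' := by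
  intro c
  induction c with
  | zero => intro a μ'; simp [run]
  | succ c ih =>
    intro a μ'
    rw [List.replicate_succ, List.cons_append, svals_cons, ih, run, List.cons_append]
    have h3 : (List.replicate c a ++ μ').length + a = μ'.length + a + c := by
      simp; omega
    rw [h3]

lemma cntO_zero_of {μ : List ℕ} (hsort : μ.Pairwise (· ≥ ·)) {t : ℕ}
    (ht : μ.length - 1 + μ.headD 0 < t) : cntO t (svals μ) = 0 :=
  List.countP_eq_zero.2 (fun y hy => by
    have := mem_svals_le hsort y hy; simp only [decide_eq_true_eq]; push_neg; intro h; omega)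

lemma cntE_zero_of {μ : List ℕ} (hsort : μ.Pairwise (· ≥ ·)) {t : ℕ}
    (ht : μ.length - 1 + μ.headD 0 < t) : cntE t (svals μ) = 0 :=
  List.countP_eq_zero.2 (fun y hy => by
    have := mem_svals_le hsort y hy; simp only [decide_eq_true_eq]; push_neg; intro h; omega)

lemma sorted_head_decomp : ∀ (μ : List ℕ), μ.Pairwise (· ≥ ·) →
    μ = [] ∨ ∃ c μ', 0 < c ∧ μ = List.replicate c (μ.headD 0) ++ μ' ∧
      ∀ x ∈ μ', x < μ.headD 0 := by
  intro μ
  induction μ with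
  | nil => intro _; left; rfl
  | cons a μ ih =>
    intro hsort
    right
    have htail : μ.Pairwise (· ≥ ·) := hsort.of_cons
    rcases ih htail with rfl | ⟨c, μ', hc, hdec, hlt⟩
    · exact ⟨1, [], one_pos, by simp, by simp⟩
    · have hmem : μ.headD 0 ∈ μ := by
        cases μ with
        | nil => simp at hdec; omega
        | cons b μ₂ => simp
      have hle : μ.headD 0 ≤ a := List.rel_of_pairwise_cons hsort hmem
      rcases eq_or_lt_of_le hle with heq | hlt2
      · refine ⟨c + 1, μ', by omega, ?_, ?_⟩
        · simp only [List.headD_cons, List.replicate_succ, List.cons_append]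
          rw [hdec, heq]
        · intro x hx; have := hlt x hx; simp only [List.headD_cons]; omega
      · refine ⟨1, μ, one_pos, by simp, ?_⟩
        intro x hx
        simp only [List.headD_cons]
        have hxle := List.rel_of_pairwise_cons hsort hx
        rcases List.mem_append.1 (by rw [hdec] at hx; exact hx) with h1 | h2
        · have := List.eq_of_mem_replicate h1; omega
        · have := hlt x h2; omega

lemma key_block (a c l' b v X Y : ℕ) (hb : b = l' + a) (hbv : b ≤ v) (hvc : v < b + c)
    (hveven : v % 2 = 0) (hX : X = 0) :
    ((b + c) / 2 - (((v + 4) ⊔ b) ⊓ (b + c)) / 2 + X + 1 ≤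
      (b + c + 1) / 2 - ((v ⊔ b) ⊓ (b + c) + 1) / 2 + Y) ∧
    ((c + l') % 2 = 0 → v + 3 ≤ c + l' - 1 + a →
      (b + c) / 2 - (((v + 4) ⊔ b) ⊓ (b + c)) / 2 + X + 2 ≤
      (b + c + 1) / 2 - ((v ⊔ b) ⊓ (b + c) + 1) / 2 + Y) := by
  constructor
  · omega
  · intro h1 h2; omega

lemma key_I1a (a c l' b t X Y : ℕ) (hb : b = l' + a) (hca : a % 2 = 0 → c % 2 = 0)
    (ht : t ≤ b - 2) (hIH : X ≤ Y + 1 + l' % 2) :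
    (b + c) / 2 - ((t ⊔ b) ⊓ (b + c)) / 2 + X ≤
      (b + c + 1) / 2 - ((t ⊔ b) ⊓ (b + c) + 1) / 2 + Y + 1 + (c + l') % 2 := by
  rcases Nat.mod_two_eq_zero_or_one a with h2 | h2
  · have := hca h2; omega
  · omega

lemma key_I1b (b c t X Y : ℕ) (hX : X = 0) (hY : Y = 0) :
    (b + c) / 2 - ((t ⊔ b) ⊓ (b + c)) / 2 + X ≤
      (b + c + 1) / 2 - ((t ⊔ b) ⊓ (b + c) + 1) / 2 + Y + 1 + z := by
  omega

lemma key_I3 (a c l' b X Y : ℕ) (hb : b = l' + a) (hca : a % 2 = 0 → c % 2 = 0)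
    (hIH : X = Y + l' % 2) :
    (b + c) / 2 - ((0 ⊔ b) ⊓ (b + c)) / 2 + X =
      (b + c + 1) / 2 - ((0 ⊔ b) ⊓ (b + c) + 1) / 2 + Y + (c + l') % 2 := by
  rcases Nat.mod_two_eq_zero_or_one a with h2 | h2
  · have := hca h2; omega
  · omega

lemma key_sub (a c l' b v X Y : ℕ)
    (hb : b = l' + a) (hc : 0 < c) (hl' : 0 < l')
    (hca : a % 2 = 0 → c % 2 = 0)
    (hveven : v % 2 = 0) (hvle : v ≤ b - 2)
    (ihw : X + 1 ≤ Y)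
    (ihs : l' % 2 = 0 → v + 4 ≤ b - 1 → X + 2 ≤ Y)
    (hzO : b - 2 < v + 4 → X = 0)
    (hE1 : 1 ≤ Y)
    (hE2 : v + 4 = b → 2 ≤ Y) :
    ((b + c) / 2 - (((v + 4) ⊔ b) ⊓ (b + c)) / 2 + X + 1 ≤
      (b + c + 1) / 2 - ((v ⊔ b) ⊓ (b + c) + 1) / 2 + Y) ∧
    ((c + l') % 2 = 0 → v + 3 ≤ c + l' - 1 + a →
      (b + c) / 2 - (((v + 4) ⊔ b) ⊓ (b + c)) / 2 + X + 2 ≤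
      (b + c + 1) / 2 - ((v ⊔ b) ⊓ (b + c) + 1) / 2 + Y) := by
  have haodd : a % 2 = 1 ∨ (a % 2 = 0 ∧ c % 2 = 0) := by
    rcases Nat.mod_two_eq_zero_or_one a with h2 | h2
    · exact Or.inr ⟨h2, hca h2⟩
    · exact Or.inl h2
  constructor
  · by_cases hcor : v + 4 ≤ b - 1
    · rcases haodd with h | h <;> omega
    · have h0 := hzO (by omega)
      rcases haodd with h | h <;> omega
  · intro hl0 hside
    rcases Nat.mod_two_eq_zero_or_one l' with hp | hp
    · by_cases hcor : v + 4 ≤ b - 1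
      · have hstr := ihs hp hcor
        omega
      · have h0 := hzO (by omega)
        by_cases h4 : v + 4 = b
        · have h2 := hE2 h4
          rcases haodd with h | h <;> omega
        · rcases haodd with h | h <;> omega
    · by_cases hcor : v + 4 ≤ b - 1
      · rcases haodd with h | h <;> omega
      · have h0 := hzO (by omega)
        by_cases h4 : v + 4 = b
        · have h2 := hE2 h4
          rcases haodd with h | h <;> omega
        · rcases haodd with h | h <;> omega

lemma key_I0 (cc aa s1 s2 l2 : ℕ) (hI : l2 % 2 = s2 % 2) :
    (cc + l2) % 2 = (cc * aa + s2) % 2 ∨ (cc % 2 = 1 ∧ aa % 2 = 0) := by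
  have hm2 : cc * aa % 2 = cc % 2 * (aa % 2) % 2 := Nat.mul_mod cc aa 2
  rcases Nat.mod_two_eq_zero_or_one cc with h1 | h1 <;>
    rcases Nat.mod_two_eq_zero_or_one aa with h2 | h2 <;>
      rw [h1, h2] at hm2 <;> norm_num at hm2 <;>
        first
          | (left; omega)
          | (right; exact ⟨h1, h2⟩)

lemma master : ∀ (N : ℕ) (μ : List ℕ), μ.length ≤ N → μ.Pairwise (· ≥ ·) →
    (∀ i : ℕ, i + 1 < μ.length → μ.getD i 0 ≤ μ.getD (i + 1) 0 + 1) →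
    (∀ m : ℕ, m % 2 = 0 → μ.count m % 2 = 0) →
    μ.length % 2 = μ.sum % 2 ∧
    cntO 0 (svals μ) = cntE 0 (svals μ) + μ.length % 2 ∧
    (∀ t, cntO t (svals μ) ≤ cntE t (svals μ) + 1 + μ.length % 2) ∧
    (∀ v ∈ svals μ, v % 2 = 0 →
      cntO (v+4) (svals μ) + 1 ≤ cntE v (svals μ) ∧
      (μ.length % 2 = 0 → v + 3 ≤ μ.length - 1 + μ.headD 0 →
        cntO (v+4) (svals μ) + 2 ≤ cntE v (svals μ))) := by
  intro N
  induction N with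
  | zero =>
    intro μ hN _ _ _
    have hnil : μ = [] := List.length_eq_zero_iff.1 (Nat.le_zero.1 hN)
    subst hnil
    exact ⟨rfl, rfl, fun t => by simp [cntO, cntE, svals], fun v hv => by simp [svals] at hv⟩
  | succ N ihN =>
    intro μ hN hsort hgap hBn
    rcases sorted_head_decomp μ hsort with rfl | ⟨c, μ', hc, hdec, hlt⟩
    · exact ⟨rfl, rfl, fun t => by simp [cntO, cntE, svals], fun v hv => by simp [svals] at hv⟩
    set a := μ.headD 0 with ha
    have hlen : μ.length = c + μ'.length := by rw [hdec]; simp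
    have hμ'len : μ'.length ≤ N := by omega
    have hsub : List.Sublist μ' μ := by rw [hdec]; exact List.sublist_append_right _ _
    have hsort' : μ'.Pairwise (· ≥ ·) := hsort.sublist hsub
    have hdrop : μ' = μ.drop c := by
      rw [hdec]
      exact (List.drop_left' (by simp)).symm
    have hgap' : ∀ i, i + 1 < μ'.length → μ'.getD i 0 ≤ μ'.getD (i + 1) 0 + 1 := by
      intro i hi
      have h1 : μ'.getD i 0 = μ.getD (c + i) 0 := by
        rw [hdrop, List.getD_eq_getElem?_getD, List.getD_eq_getElem?_getD, List.getElem?_drop]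
      have h2 : μ'.getD (i + 1) 0 = μ.getD (c + i + 1) 0 := by
        rw [hdrop, List.getD_eq_getElem?_getD, List.getD_eq_getElem?_getD, List.getElem?_drop,
          Nat.add_assoc]
      rw [h1, h2]
      exact hgap (c + i) (by omega)
    have hcount : ∀ m, μ.count m = (if a = m then c else 0) + μ'.count m := by
      intro m
      rw [hdec, List.count_append, List.count_replicate]
      congr 1
      simp
    have hcount0 : μ'.count a = 0 :=
      List.count_eq_zero.2 (fun h => by have := hlt a h; omega)
    have hBn' : ∀ m, m % 2 = 0 → μ'.count m % 2 = 0 := by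
      intro m hm
      have h1 := hBn m hm
      have h2 := hcount m
      rcases eq_or_ne a m with rfl | hne
      · rw [hcount0]
      · simp [hne] at h2; omega
    have hca : a % 2 = 0 → c % 2 = 0 := by
      intro haeven
      have h1 := hBn a haeven
      have h3 := hcount a
      simp [hcount0] at h3
      omega
    obtain ⟨IH0, IH3, IH1, IH2⟩ := ihN μ' hμ'len hsort' hgap' hBn'
    set b := μ'.length + a with hb
    have hs : svals μ = run b c ++ svals μ' := by
      rw [hdec, hb]; exact svals_rep_append c a μ'
    have hsum : μ.sum = c * a + μ'.sum := by
      rw [hdec, List.sum_append, List.sum_replicate, smul_eq_mul]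
    have hhead : μ' ≠ [] → μ'.headD 0 + 1 = a := by
      intro hne
      obtain ⟨x, xs, rfl⟩ : ∃ x xs, μ' = x :: xs := by
        cases μ' with
        | nil => exact absurd rfl hne
        | cons x xs => exact ⟨x, xs, rfl⟩
      have hxa : x < a := hlt x (by simp)
      have hg := hgap (c - 1) (by simp only [List.length_cons] at hlen; omega)
      have hc1 : c - 1 + 1 = c := by omega
      rw [hc1] at hg
      have h1 : μ.getD (c - 1) 0 = a := by
        rw [hdec, List.getD_eq_getElem?_getD, List.getElem?_append_left (by simp; omega),
          List.getElem?_replicate]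
        simp [show c - 1 < c by omega]
      have h2 : μ.getD c 0 = x := by
        rw [hdec, List.getD_eq_getElem?_getD, List.getElem?_append_right (by simp)]
        simp
      rw [h1, h2] at hg
      simp only [List.headD_cons]
      omega
    have hbound : ∀ t, b - 2 < t → cntO t (svals μ') = 0 ∧ cntE t (svals μ') = 0 := by
      intro t ht
      cases μ' with
      | nil => exact ⟨rfl, rfl⟩
      | cons x xs =>
        have hx := hhead (by simp)
        simp only [List.headD_cons] at hx
        have hlt2 : (x :: xs).length - 1 + (x :: xs).headD 0 < t := by
          simp only [List.headD_cons, List.length_cons]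
          simp only [List.length_cons] at hb
          omega
        exact ⟨cntO_zero_of hsort' hlt2, cntE_zero_of hsort' hlt2⟩
    clear_value a b
    refine ⟨?_, ?_, ?_, ?_⟩
    · -- I0 : parity of length vs sum
      rw [hlen, hsum]
      rcases key_I0 c a 0 μ'.sum μ'.length IH0 with h | ⟨h1, h2⟩
      · exact h
      · exact absurd (hca h2) (by omega)
    · -- I3
      rw [hs, cntO_append, cntE_append, cntO_run, cntE_run, hlen]
      exact key_I3 a c μ'.length b (cntO 0 (svals μ')) (cntE 0 (svals μ')) hb hca IH3
    · -- I1
      intro t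
      rw [hs, cntO_append, cntE_append, cntO_run, cntE_run, hlen]
      by_cases ht : t ≤ b - 2
      · exact key_I1a a c μ'.length b t _ _ hb hca ht (IH1 t)
      · obtain ⟨hz1, hz2⟩ := hbound t (by omega)
        exact key_I1b b c t _ _ hz1 hz2
    · -- I2
      intro v hv hveven
      rw [hs] at hv
      rw [hs, cntO_append, cntE_append, cntO_run, cntE_run, hlen]
      rcases List.mem_append.1 hv with hvr | hvs
      · have hm := mem_run.1 hvr
        obtain ⟨hz1, hz2⟩ := hbound (v + 4) (by omega)
        exact key_block a c μ'.length b v _ _ hb hm.1 hm.2 hveven hz1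
      · have hne : μ' ≠ [] := by rintro rfl; simp [svals] at hvs
        have hx := hhead hne
        have hl'pos : 0 < μ'.length := List.length_pos_iff.2 hne
        have hvle : v ≤ b - 2 := by
          have h1 := mem_svals_le hsort' v hvs
          cases μ' with
          | nil => exact absurd rfl hne
          | cons x xs =>
            simp only [List.headD_cons] at hx
            simp only [List.headD_cons, List.length_cons] at h1
            simp only [List.length_cons] at hb
            omega
        have hE1 : 1 ≤ cntE v (svals μ') := by
          rw [cntE]
          exact List.countP_pos_iff.2 ⟨v, hvs, by simp [hveven]⟩
        have hE2 : v + 4 = b → 2 ≤ cntE v (svals μ') := by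
          intro h4
          cases μ' with
          | nil => exact absurd rfl hne
          | cons x xs =>
            simp only [List.headD_cons] at hx
            simp only [List.length_cons] at hb
            rw [svals_cons] at hvs ⊢
            rw [cntE_cons]
            have htop : xs.length + x = v + 2 := by omega
            have hvin : v ∈ svals xs := by
              rcases List.mem_cons.1 hvs with h | h
              · omega
              · exact h
            have h5 : 1 ≤ cntE v (svals xs) := by
              rw [cntE]
              exact List.countP_pos_iff.2 ⟨v, hvin, by simp [hveven]⟩
            have hif : (if v ≤ xs.length + x ∧ (xs.length + x) % 2 = 0 then 1 else 0) = 1 := by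
              rw [if_pos]; constructor <;> omega
            omega
        have hzO : b - 2 < v + 4 → cntO (v + 4) (svals μ') = 0 :=
          fun h => (hbound (v + 4) h).1
        obtain ⟨ihw, ihs⟩ := IH2 v hvs hveven
        have ihs' : μ'.length % 2 = 0 → v + 4 ≤ b - 1 →
            cntO (v + 4) (svals μ') + 2 ≤ cntE v (svals μ') := by
          intro h1 h2
          refine ihs h1 ?_
          cases μ' with
          | nil => exact absurd rfl hne
          | cons x xs =>
            simp only [List.headD_cons] at hx
            simp only [List.headD_cons, List.length_cons]
            simp only [List.length_cons] at hb
            omega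
        exact key_sub a c μ'.length b v _ _ hb hc hl'pos hca hveven hvle ihw ihs' hzO hE1 hE2

lemma cntO_eq_countP_oddVals (lam : List ℕ) (v : ℕ) :
    cntO v (svals lam) = (oddVals lam).countP (fun y => decide (v ≤ y)) := by
  rw [oddVals, List.countP_reverse, List.countP_filter, cntO]
  refine List.countP_congr (fun y _ => ?_)
  simp

lemma cntE_eq_countP_evenVals (lam : List ℕ) (v : ℕ) :
    cntE v (svals lam) = (evenVals lam).countP (fun y => decide (v ≤ y)) := by
  rw [evenVals, List.countP_reverse, List.countP_filter, cntE]
  refine List.countP_congr (fun y _ => ?_)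
  simp

lemma length_oddVals (lam : List ℕ) : (oddVals lam).length = cntO 0 (svals lam) := by
  rw [oddVals, List.length_reverse, ← List.countP_eq_length_filter, cntO]
  refine (List.countP_congr (fun y _ => ?_)).symm
  simp

lemma length_evenVals (lam : List ℕ) : (evenVals lam).length = cntE 0 (svals lam) := by
  rw [evenVals, List.length_reverse, ← List.countP_eq_length_filter, cntE]
  refine (List.countP_congr (fun y _ => ?_)).symm
  simp

lemma count_ge_le {E : List ℕ} {j t : ℕ} (hj : j ≤ E.length)
    (hlt : ∀ k (h : k < E.length), k < j → E[k] < t) :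
    E.countP (fun y => decide (t ≤ y)) ≤ E.length - j := by
  conv_lhs => rw [← List.take_append_drop j E]
  rw [List.countP_append]
  have h1 : (E.take j).countP (fun y => decide (t ≤ y)) = 0 := by
    rw [List.countP_eq_zero]
    intro y hy
    rw [List.mem_iff_getElem] at hy
    obtain ⟨k, hk, rfl⟩ := hy
    have hkj : k < j := by
      have h3 := hk; rw [List.length_take] at h3; omega
    have hkE : k < E.length := by omega
    have hget : (E.take j)[k] = E[k] := List.getElem_take
    rw [hget]
    have := hlt k hkE hkj
    simp only [decide_eq_true_eq]
    omega
  have h2 : (E.drop j).countP (fun y => decide (t ≤ y)) ≤ (E.drop j).length :=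
    List.countP_le_length
  rw [List.length_drop] at h2
  omega

lemma count_ge_ge {E : List ℕ} (hE : E.Pairwise (· < ·)) {j t : ℕ} (hj : j < E.length)
    (ht : t ≤ E[j]) :
    E.length - j ≤ E.countP (fun y => decide (t ≤ y)) := by
  conv_rhs => rw [← List.take_append_drop j E]
  rw [List.countP_append]
  have h2 : (E.drop j).countP (fun y => decide (t ≤ y)) = (E.drop j).length := by
    rw [List.countP_eq_length]
    intro y hy
    rw [List.mem_iff_getElem] at hy
    obtain ⟨k, hk, rfl⟩ := hy
    have hjk : j + k < E.length := by
      have h3 := hk; rw [List.length_drop] at h3; omega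
    have hget : (E.drop j)[k] = E[j + k]'hjk := List.getElem_drop
    rw [hget]
    simp only [decide_eq_true_eq]
    rcases Nat.eq_zero_or_pos k with rfl | hk0
    · simpa using ht
    · have := List.pairwise_iff_getElem.1 hE j (j + k) hj hjk (by omega)
      omega
  rw [List.length_drop] at h2
  omega

lemma evenVals_sorted {lam : List ℕ} (hsort : lam.Pairwise (· ≥ ·)) :
    (evenVals lam).Pairwise (· < ·) := by
  unfold evenVals
  rw [List.pairwise_reverse]
  exact (svals_sorted hsort).filter _

lemma oddVals_sorted {lam : List ℕ} (hsort : lam.Pairwise (· ≥ ·)) :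
    (oddVals lam).Pairwise (· < ·) := by
  unfold oddVals
  rw [List.pairwise_reverse]
  exact (svals_sorted hsort).filter _

lemma mem_evenVals {lam : List ℕ} {y : ℕ} (h : y ∈ evenVals lam) :
    y ∈ svals lam ∧ y % 2 = 0 := by
  unfold evenVals at h
  rw [List.mem_reverse, List.mem_filter] at h
  simpa using h

lemma mem_oddVals {lam : List ℕ} {y : ℕ} (h : y ∈ oddVals lam) :
    y ∈ svals lam ∧ y % 2 = 1 := by
  unfold oddVals at h
  rw [List.mem_reverse, List.mem_filter] at h
  simpa using h


/-- For a rigid `B_n` partition `lam` with length `l`, `M = (l+1)/2`, and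
symbol `(α_1, …, α_M; β_1, …, β_{M-1})` in the `B_n` theory, one has
`α_{i+1} ≤ β_i` for every `1 ≤ i ≤ M - 1` (1-based entry `α_q` is the
0-based entry `q - 1` of `topRow lam`, similarly for `β`). -/
theorem Bn_symbol_ineq (n : ℕ) (lam : List ℕ) (M : ℕ)
    (hsort : lam.Pairwise (· ≥ ·))
    (hpos : ∀ x ∈ lam, 0 < x)
    (hsum : lam.sum = 2 * n + 1)
    (hBn : ∀ m : ℕ, Even m → Even (lam.count m))
    (hgap : ∀ i : ℕ, i + 1 < lam.length → lam.getD i 0 ≤ lam.getD (i + 1) 0 + 1)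
    (hrig : ∀ m : ℕ, Odd m → lam.count m ≠ 2)
    (hM : M = (lam.length + 1) / 2) :
    ∀ i : ℕ, 1 ≤ i → i ≤ M - 1 →
      (topRow lam).getD i 0 ≤ (botRow lam).getD (i - 1) 0 := by
  have hBn' : ∀ m, m % 2 = 0 → lam.count m % 2 = 0 := by
    intro m hm
    exact Nat.even_iff.1 (hBn m (Nat.even_iff.2 hm))
  obtain ⟨I0, I3, I1, I2⟩ := master lam.length lam le_rfl hsort hgap hBn'
  have hlodd : lam.length % 2 = 1 := by
    rw [I0, hsum]; omega
  have htot := cntO_add_cntE (svals lam)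
  rw [length_svals] at htot
  have lenO : (oddVals lam).length = M := by
    rw [length_oddVals]; omega
  have lenE : (evenVals lam).length = M - 1 := by
    rw [length_evenVals]; omega
  intro i hi1 hi2
  have hM2 : 2 ≤ M := by omega
  have hiO : i < (oddVals lam).length := by omega
  have hiE : i - 1 < (evenVals lam).length := by omega
  have hEsort : (evenVals lam).Pairwise (· < ·) := evenVals_sorted hsort
  have hOsort : (oddVals lam).Pairwise (· < ·) := oddVals_sorted hsort
  obtain ⟨hvmem, hveven⟩ := mem_evenVals (List.getElem_mem hiE)
  obtain ⟨homem, hoodd⟩ := mem_oddVals (List.getElem_mem hiO)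
  -- main inequality
  have hkey : (oddVals lam)[i] ≤ (evenVals lam)[i-1] + 3 := by
    by_contra hko
    push_neg at hko
    have wI2 := (I2 _ hvmem hveven).1
    have e1 : cntE (evenVals lam)[i-1] (svals lam) ≤ (evenVals lam).length - (i-1) := by
      rw [cntE_eq_countP_evenVals]
      refine count_ge_le (by omega) ?_
      intro k hk hkj
      exact List.pairwise_iff_getElem.1 hEsort k (i-1) hk hiE hkj
    have e2 : (oddVals lam).length - i ≤ cntO ((evenVals lam)[i-1] + 4) (svals lam) := by
      rw [cntO_eq_countP_oddVals]
      exact count_ge_ge hOsort hiO (by omega)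
    omega
  have h1 : (topRow lam).getD i 0 = ((oddVals lam)[i] - 1) / 2 - i := by
    rw [topRow, List.getD_eq_getElem _ _ (by rw [List.length_mapIdx]; omega),
      List.getElem_mapIdx]
  have h2 : (botRow lam).getD (i-1) 0 = (evenVals lam)[i-1] / 2 - (i-1) := by
    rw [botRow, List.getD_eq_getElem _ _ (by rw [List.length_mapIdx]; omega),
      List.getElem_mapIdx]
  rw [h1, h2]
  omega
end

section
/- Let λ be a rigid C_n partition such that every nonempty row of its transposed diagram is even, i.e. λ^T_i is even for every 1 ≤ i ≤ λ_1. Let M be the common number of entries in each row of its symbol (α_1, …, α_M; β_1, …, β_M) in the C_n theory. Then α_i ≤ β_i for every 1 ≤ i ≤ M. -/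
inductive Doubled : List ℕ → Prop
  | nil : Doubled []
  | cons (a : ℕ) {l : List ℕ} : Doubled l → Doubled (a :: a :: l)

lemma svals_cons2 (a : ℕ) (l : List ℕ) :
    svals (a :: a :: l) = (l.length + 1 + a) :: (l.length + a) :: svals l := by
  unfold svals
  simp only [List.mapIdx_cons, List.length_cons, List.cons.injEq]
  refine ⟨by omega, by omega, ?_⟩
  have : (fun (i : ℕ) (a : ℕ) => l.length + 1 + 1 - 1 - (i + 1 + 1) + a)
      = (fun (k : ℕ) (a : ℕ) => l.length - 1 - k + a) := by
    funext i b; omega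
  rw [this]

lemma doubled_main {L : List ℕ} (hl : Doubled L) :
    (oddVals L).length = (evenVals L).length ∧
    ∀ i < (oddVals L).length, (topRow L).getD i 0 ≤ (botRow L).getD i 0 := by
  induction hl with
  | nil => simp [oddVals, evenVals, svals, topRow, botRow]
  | cons a hd ih =>
    rename_i l
    set v := l.length + a with hv
    obtain ⟨ihlen, ihle⟩ := ih
    -- decompose oddVals / evenVals
    have hodd : v % 2 = 0 ∨ v % 2 = 1 := by omega
    obtain ⟨w, w', hw, hw', hww'⟩ :
        ∃ w w' : ℕ, oddVals (a :: a :: l) = oddVals l ++ [w] ∧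
          evenVals (a :: a :: l) = evenVals l ++ [w'] ∧ (w - 1) / 2 ≤ w' / 2 := by
      have hv1 : l.length + 1 + a = v + 1 := by omega
      rcases hodd with h | h
      · have h1 : (v + 1) % 2 = 1 := by omega
        refine ⟨v + 1, v, ?_, ?_, by omega⟩ <;>
        · simp only [oddVals, evenVals]
          rw [svals_cons2, hv1, ← hv]
          simp [List.filter_cons, h, h1]
      · have h1 : (v + 1) % 2 = 0 := by omega
        refine ⟨v, v + 1, ?_, ?_, by omega⟩ <;>
        · simp only [oddVals, evenVals]
          rw [svals_cons2, hv1, ← hv]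
          simp [List.filter_cons, h, h1]
    have htop : topRow (a :: a :: l) = topRow l ++ [(w - 1) / 2 - (oddVals l).length] := by
      unfold topRow; rw [hw, List.mapIdx_concat]
    have hbot : botRow (a :: a :: l) = botRow l ++ [w' / 2 - (evenVals l).length] := by
      unfold botRow; rw [hw', List.mapIdx_concat]
    have hlt : (topRow l).length = (oddVals l).length := List.length_mapIdx
    have hlb : (botRow l).length = (evenVals l).length := List.length_mapIdx
    constructor
    · rw [hw, hw']; simp [ihlen]
    · intro i hi
      rw [hw, List.length_append, List.length_singleton] at hi
      rw [htop, hbot]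
      rcases Nat.lt_or_ge i (oddVals l).length with h | h
      · rw [List.getD_append _ _ _ _ (by omega), List.getD_append _ _ _ _ (by omega)]
        exact ihle i h
      · have hieq : i = (oddVals l).length := by omega
        rw [List.getD_append_right _ _ _ _ (by omega), List.getD_append_right _ _ _ _ (by omega)]
        simp [hlt, hlb, hieq, ihlen]
        omega

lemma countP_le_split (m : ℕ) (l : List ℕ) :
    l.countP (fun a => decide (m ≤ a)) = l.count m + l.countP (fun a => decide (m + 1 ≤ a)) := by
  induction l with
  | nil => simp
  | cons a t ih =>
    simp only [List.countP_cons, List.count_cons, ih, decide_eq_true_eq, beq_iff_eq]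
    split_ifs <;> omega

lemma doubled_of_sorted : ∀ N (l : List ℕ), l.length ≤ N → l.Pairwise (· ≥ ·) →
    (∀ m, Even (l.count m)) → Doubled l := by
  intro N
  induction N with
  | zero =>
    intro l hl _ _
    rw [Nat.le_zero, List.length_eq_zero_iff] at hl
    rw [hl]; exact Doubled.nil
  | succ N ih =>
    intro l hl hs hc
    rcases l with _ | ⟨a, _ | ⟨b, t⟩⟩
    · exact Doubled.nil
    · exfalso
      have := hc a
      simp [Nat.even_iff] at this
    · have hab : a ≥ b := List.rel_of_pairwise_cons hs (a' := b) (by simp)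
      have hmem : a ∈ b :: t := by
        have he := hc a
        rw [List.count_cons_self] at he
        by_contra hmm
        rw [List.count_eq_zero.mpr hmm] at he
        simp [Nat.even_iff] at he
      have hba : b = a := by
        rcases List.mem_cons.mp hmem with h | h
        · exact h.symm
        · have : b ≥ a := List.rel_of_pairwise_cons hs.of_cons h
          omega
      subst hba
      refine Doubled.cons b (ih t (by simp at hl ⊢; omega) hs.of_cons.of_cons ?_)
      intro m
      have := hc m
      have hcc : (b :: b :: t).count m = t.count m + (if m = b then 2 else 0) := by
        simp only [List.count_cons, beq_iff_eq]; split_ifs <;> omega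
      rw [hcc, Nat.even_iff] at this
      rw [Nat.even_iff]
      split_ifs at this <;> omega

/-- For a rigid `C_n` partition `lam` all of whose nonempty transposed rows
`λ^T_i` (`1 ≤ i ≤ λ_1`) are even, the symbol `(α_1, …, α_M; β_1, …, β_M)` of
`lam` in the `C_n` theory (computed from `lam` padded with one `0` when its
length is odd, `M` the common row length) satisfies `α_i ≤ β_i` for all
`1 ≤ i ≤ M`. -/
theorem Cn_symbol_ineq_allEvenRows (n : ℕ) (hn : 0 < n) (lam : List ℕ)
    (hsort : lam.Pairwise (· ≥ ·))
    (hpos : ∀ x ∈ lam, 0 < x)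
    (hsum : lam.sum = 2 * n)
    (hCn : ∀ m : ℕ, Odd m → Even (lam.count m))
    (hgap : ∀ i : ℕ, i + 1 < lam.length → lam.getD i 0 ≤ lam.getD (i + 1) 0 + 1)
    (hrig : ∀ m : ℕ, Even m → lam.count m ≠ 2)
    (halleven : ∀ i : ℕ, 1 ≤ i → i ≤ lam.getD 0 0 →
      (lam.countP (fun a => decide (i ≤ a))) % 2 = 0) :
    ∀ lam' : List ℕ, lam' = (if lam.length % 2 = 1 then lam ++ [0] else lam) →
    ∀ M : ℕ, M = (topRow lam').length →
    ∀ i : ℕ, 1 ≤ i → i ≤ M →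
      (topRow lam').getD (i - 1) 0 ≤ (botRow lam').getD (i - 1) 0 := by
  have hne : lam ≠ [] := by
    intro h; rw [h] at hsum; simp at hsum; omega
  obtain ⟨a, t, rfl⟩ := List.exists_cons_of_ne_nil hne
  have hmax : ∀ x ∈ a :: t, x ≤ a := by
    intro x hx
    rcases List.mem_cons.mp hx with h | h
    · exact le_of_eq h
    · exact List.rel_of_pairwise_cons hsort h
  have ha1 : 1 ≤ a := hpos a (by simp)
  have hhead : (a :: t).getD 0 0 = a := rfl
  have hec : ∀ m, Even ((a :: t).count m) := by
    intro m
    rcases Nat.eq_zero_or_pos m with rfl | hm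
    · have h0 : (0 : ℕ) ∉ a :: t := fun h => absurd (hpos 0 h) (lt_irrefl 0)
      rw [List.count_eq_zero.mpr h0]; exact Even.zero
    rcases le_or_gt m a with hma | hma
    · have hA := halleven m hm (by rw [hhead]; exact hma)
      have hB : ((a :: t).countP (fun x => decide (m + 1 ≤ x))) % 2 = 0 := by
        rcases le_or_gt (m + 1) a with h | h
        · exact halleven (m + 1) (by omega) (by rw [hhead]; exact h)
        · rw [List.countP_eq_zero.mpr]
          intro x hx; have := hmax x hx; simp; omega
      have hsplit := countP_le_split m (a :: t)
      rw [Nat.even_iff]; omega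
    · have h0 : m ∉ a :: t := fun h => absurd (hmax m h) (by omega)
      rw [List.count_eq_zero.mpr h0]; exact Even.zero
  have hlen : (a :: t).length % 2 = 0 := by
    have h1 : (a :: t).countP (fun x => decide (1 ≤ x)) = (a :: t).length := by
      rw [List.countP_eq_length]
      intro x hx; have := hpos x hx; simp; omega
    rw [← h1]; exact halleven 1 le_rfl (by rw [hhead]; exact ha1)
  intro lam' hlam' M hM i hi1 hiM
  have hlam : lam' = a :: t := by rw [hlam', if_neg (by omega)]
  subst hlam
  obtain ⟨hL, hIneq⟩ :=
    doubled_main (doubled_of_sorted (a :: t).length _ le_rfl hsort hec)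
  apply hIneq
  have hl : (topRow (a :: t)).length = (oddVals (a :: t)).length := List.length_mapIdx
  omega
end

section
/- Let λ be a rigid D_n partition with length l (so l is even), M = l/2, and symbol (α_1, …, α_M; β_1, …, β_{M+1}) in the D_n theory. Then α_i ≥ β_{i+1} for every 1 ≤ i ≤ M. -/
namespace DnAux

open List

def evP : ℕ → Bool := fun x => decide (x % 2 = 0)
def odP : ℕ → Bool := fun x => decide (x % 2 = 1)
def evB (B : ℕ) : ℕ → Bool := fun x => decide (x % 2 = 0 ∧ x ≤ B)
def odB (B : ℕ) : ℕ → Bool := fun x => decide (x % 2 = 1 ∧ x ≤ B)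

def fval (p c m : ℕ) : ℕ :=
  if c % 2 = 1 then 2 - p % 2 else if m % 2 = 0 then 1 + p % 2 else 3 - 3 * (p % 2)

lemma fval_ge_one {p c m : ℕ} (hp : p % 2 = 1) (hm : c % 2 = 1 ∨ m % 2 = 0) :
    1 ≤ fval p c m := by
  unfold fval; split_ifs <;> first | omega | exact absurd trivial (by omega) | exact (‹False›).elim

lemma mapIdx_congr' {f g : ℕ → ℕ → ℕ} (l : List ℕ) (h : ∀ i x, f i x = g i x) :
    l.mapIdx f = l.mapIdx g := by
  induction l generalizing f g with
  | nil => simp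
  | cons a l ih =>
      rw [List.mapIdx_cons, List.mapIdx_cons, h]
      exact congrArg _ (ih (fun i x => h _ _))

lemma svals_cons (a : ℕ) (ys : List ℕ) :
    svals (a :: ys) = (ys.length + a) :: svals ys := by
  unfold svals
  rw [List.mapIdx_cons]
  simp only [List.length_cons]
  refine congrArg₂ _ (by omega) ?_
  exact mapIdx_congr' ys (fun i x => by omega)

lemma length_svals (ys : List ℕ) : (svals ys).length = ys.length := by
  simp [svals]

lemma getElem_svals (ys : List ℕ) (k : ℕ) (h : k < (svals ys).length) :
    (svals ys)[k] = ys.length - 1 - k + ys[k]'(by simpa [length_svals] using h) := by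
  simp [svals, List.getElem_mapIdx]

lemma svals_nil_zero : svals [0] = [0] := rfl

lemma svals_le_max {c : ℕ} {ys : List ℕ} (h : List.Pairwise (· ≥ ·) (c :: ys)) :
    ∀ v ∈ svals (c :: ys), v ≤ ys.length + c := by
  intro v hv
  rw [List.mem_iff_getElem] at hv
  obtain ⟨k, hk, rfl⟩ := hv
  rw [getElem_svals]
  have hk' : k < (c :: ys).length := by simpa [length_svals] using hk
  have hle : (c :: ys)[k] ≤ c := by
    rcases Nat.eq_zero_or_pos k with h0 | h0
    · subst h0; simp
    · have := List.pairwise_iff_getElem.1 h 0 k (by simp) hk' h0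
      simpa using this
  simp only [List.length_cons]
  omega

lemma svals_sorted {ys : List ℕ} (h : List.Pairwise (· ≥ ·) ys) :
    List.Pairwise (· > ·) (svals ys) := by
  rw [List.pairwise_iff_getElem]
  intro i j hi hj hij
  rw [getElem_svals, getElem_svals]
  have hi' : i < ys.length := by simpa [length_svals] using hi
  have hj' : j < ys.length := by simpa [length_svals] using hj
  have : ys[j] ≤ ys[i] := by
    have := List.pairwise_iff_getElem.1 h i j hi' hj' hij
    simpa using this
  omega

lemma sorted_append_zero {ys : List ℕ} (h : List.Pairwise (· ≥ ·) ys) :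
    List.Pairwise (· ≥ ·) (ys ++ [0]) := by
  rw [List.pairwise_append]
  exact ⟨h, by simp, by simp⟩

lemma getD_append (pre ρ : List ℕ) (k : ℕ) (_hk : k < ρ.length) :
    (pre ++ ρ).getD (pre.length + k) 0 = ρ.getD k 0 := by
  rw [List.getD_eq_getElem?_getD, List.getD_eq_getElem?_getD,
      List.getElem?_append_right (by omega), Nat.add_sub_cancel_left]

lemma count_suffix {lam pre σ : List ℕ} {a x : ℕ} (hpre : pre ++ (a :: σ) = lam)
    (hsort : lam.Pairwise (· ≥ ·)) (hx : x < a) : σ.count x = lam.count x := by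
  have hsort' : (pre ++ (a :: σ)).Pairwise (· ≥ ·) := by rw [hpre]; exact hsort
  have hpre0 : pre.count x = 0 := by
    rw [List.count_eq_zero]
    intro hmem
    have := (List.pairwise_append.1 hsort').2.2 x hmem a (by simp)
    omega
  have hax : (a == x) = false := by
    simp only [beq_eq_false_iff_ne, ne_eq]
    omega
  rw [← hpre, List.count_append, List.count_cons, hax]
  simp [hpre0]

lemma main_inv (lam : List ℕ) (hsort : lam.Pairwise (· ≥ ·))
    (hDn : ∀ m : ℕ, Even m → Even (lam.count m))
    (hgap : ∀ i : ℕ, i + 1 < lam.length → lam.getD i 0 ≤ lam.getD (i + 1) 0 + 1) :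
    ∀ σ : List ℕ, σ <:+ lam → ∀ c τ, σ = c :: τ →
      ((svals (σ ++ [0])).countP evP
         = (svals (σ ++ [0])).countP odP + fval (σ.length + c) c (σ.count c))
      ∧ (∀ v, v % 2 = 1 → v ∈ svals (σ ++ [0]) → v ≠ σ.length + c →
          (svals (σ ++ [0])).countP (odB v) + 1 ≤ (svals (σ ++ [0])).countP (evB (v + 1))) := by
  intro σ
  induction σ with
  | nil => intro _ c τ h; exact absurd h (by simp)
  | cons a σ' ih =>
    intro hsuf c' τ' heq
    injection heq with h1 h2
    subst h1; subst h2
    match σ' with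
    | [] =>
      have h1 : svals ([a] ++ [0]) = (1 + a) :: [0] := by
        rw [show (([a] : List ℕ) ++ [0]) = a :: [0] from rfl, svals_cons, svals_nil_zero]
        norm_num
      constructor
      · rw [h1]
        simp only [List.countP_cons, List.countP_nil, evP, odP, fval, List.length_singleton,
          List.count_cons_self, List.count_nil, decide_eq_true_eq]
        split_ifs <;> first | omega | exact absurd trivial (by omega) | exact (‹False›).elim
      · intro v hv1 hv2 hv3
        rw [h1] at hv2
        simp only [List.length_singleton] at hv3
        simp only [List.mem_cons, List.mem_singleton] at hv2
        rcases hv2 with h | h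
        · exact absurd h hv3
        · simp only [List.mem_singleton, List.mem_nil_iff, or_false] at h
          omega
    | c :: τ =>
      have hsuf' : (c :: τ) <:+ lam := (List.suffix_cons a _).trans hsuf
      obtain ⟨hN, hA⟩ := ih hsuf' c τ rfl
      have hsorted_all : List.Pairwise (· ≥ ·) (a :: c :: τ) :=
        List.Pairwise.sublist hsuf.sublist hsort
      have hca : c ≤ a := (List.pairwise_cons.1 hsorted_all).1 c (by simp)
      have hsorted' : List.Pairwise (· ≥ ·) (c :: τ) := (List.pairwise_cons.1 hsorted_all).2
      have hxc : ∀ x ∈ (c :: τ), x ≤ c := by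
        intro x hx
        rcases List.mem_cons.1 hx with rfl | hx
        · exact le_refl x
        · exact (List.pairwise_cons.1 hsorted').1 x hx
      obtain ⟨pre, hpre⟩ := hsuf
      have hgap1 : a ≤ c + 1 := by
        have e1 : lam.getD pre.length 0 = a := by
          rw [← hpre]
          have := getD_append pre (a :: c :: τ) 0 (by simp)
          simpa using this
        have e2 : lam.getD (pre.length + 1) 0 = c := by
          rw [← hpre]
          have := getD_append pre (a :: c :: τ) 1 (by simp)
          simpa using this
        have hlen : pre.length + 1 < lam.length := by
          rw [← hpre, List.length_append]
          simp only [List.length_cons]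
          omega
        have := hgap pre.length hlen
        omega
      -- key recursion
      have hrec : svals ((a :: c :: τ) ++ [0])
          = ((τ.length + 1 + 1) + a) :: svals ((c :: τ) ++ [0]) := by
        rw [List.cons_append, svals_cons]
        congr 2
        simp [List.length_append]
      have hbound : ∀ v ∈ svals ((c :: τ) ++ [0]), v ≤ τ.length + 1 + c := by
        have hs0 : List.Pairwise (· ≥ ·) ((c :: τ) ++ [0]) := sorted_append_zero hsorted'
        rw [List.cons_append] at hs0
        intro v hv
        rw [List.cons_append] at hv
        have := svals_le_max hs0 v hv
        simpa [List.length_append] using this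
      have hacases : a = c ∨ a = c + 1 := by omega
      -- multiplicity facts
      have hmfact : a = c + 1 → (c % 2 = 1 ∨ ((c :: τ).count c) % 2 = 0) := by
        intro ha
        rcases Nat.mod_two_eq_zero_or_one c with hc | hc
        · right
          have hcount : (c :: τ).count c = lam.count c :=
            count_suffix hpre hsort (by omega)
          have := hDn c (Nat.even_iff.2 hc)
          rw [← hcount] at this
          exact Nat.even_iff.1 this
        · left; exact hc
      constructor
      · -- the counting identity (N)
        rw [hrec, List.countP_cons, List.countP_cons]
        simp only [List.length_cons] at hN ⊢
        rcases hacases with rfl | rfl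
        · rw [List.count_cons_self]
          rw [hN]
          simp only [evP, odP, fval, decide_eq_true_eq]
          split_ifs <;> first | omega | exact absurd trivial (by omega) | exact (‹False›).elim
        · have hnot : (c + 1) ∉ (c :: τ) := by
            intro hmem
            have := hxc _ hmem
            omega
          rw [List.count_cons_self, List.count_eq_zero.2 hnot]
          rw [hN]
          have hh := hmfact rfl
          simp only [evP, odP, fval, decide_eq_true_eq]
          rcases hh with hh | hh <;> split_ifs <;> first | omega | exact absurd trivial (by omega) | exact (‹False›).elim
      · -- the (A) invariant
        intro v hv1 hv2 hv3
        rw [hrec] at hv2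
        simp only [List.length_cons] at hv3
        have hv2' : v ∈ svals ((c :: τ) ++ [0]) := by
          rcases List.mem_cons.1 hv2 with h | h
          · exact absurd h (by omega)
          · exact h
        have hvle : v ≤ τ.length + 1 + c := hbound v hv2'
        rw [hrec, List.countP_cons, List.countP_cons]
        have hodBt : ¬(odB v (τ.length + 1 + 1 + a) = true) := by
          simp only [odB, decide_eq_true_eq]
          omega
        rw [if_neg hodBt]
        rcases eq_or_ne v (τ.length + 1 + c) with hvmax | hvmax
        · -- deferred instance at the old maximum
          have h1 : (svals ((c :: τ) ++ [0])).countP (odB v)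
              = (svals ((c :: τ) ++ [0])).countP odP := by
            refine List.countP_congr (fun x hx => ?_)
            have := hbound x hx
            simp only [odB, odP, decide_eq_true_eq]
            omega
          have h2 : (svals ((c :: τ) ++ [0])).countP (evB (v + 1))
              = (svals ((c :: τ) ++ [0])).countP evP := by
            refine List.countP_congr (fun x hx => ?_)
            have := hbound x hx
            simp only [evB, evP, decide_eq_true_eq]
            omega
          rw [h1, h2]
          simp only [List.length_cons] at hN
          rw [hN]
          rcases hacases with h | h
          · have hte : evB (v + 1) (τ.length + 1 + 1 + a) = true := by
              simp only [evB, decide_eq_true_eq]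
              omega
            rw [if_pos hte]
            omega
          · have hte : ¬(evB (v + 1) (τ.length + 1 + 1 + a) = true) := by
              simp only [evB, decide_eq_true_eq]
              omega
            rw [if_neg hte]
            have hge : 1 ≤ fval (τ.length + 1 + c) c (List.count c (c :: τ)) :=
              fval_ge_one (by omega) (hmfact h)
            omega
        · -- old instance
          have h := hA v hv1 hv2' (by simpa [List.length_cons] using hvmax)
          split_ifs <;> first | omega | exact absurd trivial (by omega) | exact (‹False›).elim


-- sorted counting lemmas
section
variable {L : List ℕ}



/-- in a sorted-ascending list, `i+1` entries are `≤ L[i]`. -/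
lemma countP_ge_of_sorted (h : L.Pairwise (· ≤ ·)) {i : ℕ} (hi : i < L.length) {B : ℕ}
    (hB : L[i] ≤ B) : i + 1 ≤ L.countP (fun x => decide (x ≤ B)) := by
  have hsub := (List.take_sublist (i+1) L).countP_le (p := fun x => decide (x ≤ B))
  have hlen : (L.take (i+1)).length = i + 1 := by
    rw [List.length_take]; omega
  have hall : ∀ a ∈ L.take (i+1), (fun x => decide (x ≤ B)) a = true := by
    intro a ha
    rw [List.mem_iff_getElem] at ha
    obtain ⟨j, hj, rfl⟩ := ha
    rw [List.getElem_take]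
    have hj' : j < L.length := by rw [hlen] at hj; omega
    rcases Nat.lt_or_ge j i with hji | hji
    · have := List.pairwise_iff_getElem.1 h j i hj' hi hji
      simp only [decide_eq_true_eq]
      omega
    · have : j = i := by rw [hlen] at hj; omega
      subst this
      simp only [decide_eq_true_eq]; omega
  rw [← hlen]
  exact le_trans (le_of_eq (List.countP_eq_length.2 hall).symm) hsub

lemma getElem_le_of_countP (h : L.Pairwise (· ≤ ·)) {i B : ℕ}
    (hc : i + 1 ≤ L.countP (fun x => decide (x ≤ B))) :
    ∃ hi : i < L.length, L[i] ≤ B := by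
  have hi : i < L.length := lt_of_lt_of_le hc List.countP_le_length
  refine ⟨hi, ?_⟩
  by_contra hB
  push_neg at hB
  have hsplit : L.countP (fun x => decide (x ≤ B)) =
      (L.take i).countP (fun x => decide (x ≤ B)) +
      (L.drop i).countP (fun x => decide (x ≤ B)) := by
    conv_lhs => rw [← List.take_append_drop i L]
    exact List.countP_append
  have hdrop : (L.drop i).countP (fun x => decide (x ≤ B)) = 0 := by
    rw [List.countP_eq_zero]
    intro a ha
    rw [List.mem_iff_getElem] at ha
    obtain ⟨j, hj, rfl⟩ := ha
    rw [List.getElem_drop]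
    have hj' : i + j < L.length := by
      have : (L.drop i).length = L.length - i := List.length_drop; omega
    have : L[i] ≤ L[i+j] := by
      rcases Nat.eq_zero_or_pos j with h0 | h0
      · subst h0; simp
      · exact List.pairwise_iff_getElem.1 h i (i+j) hi hj' (by omega)
    simp only [decide_eq_true_eq]
    omega
  have := (List.take_sublist i L).length_le
  have htk : (L.take i).countP (fun x => decide (x ≤ B)) ≤ (L.take i).length := List.countP_le_length
  rw [List.length_take] at htk
  omega

end



lemma countP_odd_parity (L : List ℕ) : L.countP odP % 2 = L.sum % 2 := by
  induction L with
  | nil => simp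
  | cons x L ih =>
    rw [List.countP_cons, List.sum_cons]
    simp only [odP, decide_eq_true_eq]
    split_ifs with h <;> omega

lemma cnt_split (b : ℕ) (L : List ℕ) :
    L.countP (fun x => decide (x % 2 = 0 ∧ x < b + 1)) =
      L.countP (fun x => decide (x % 2 = 0 ∧ x < b)) + (if b % 2 = 0 then L.count b else 0) := by
  induction L with
  | nil => simp
  | cons x L ih =>
    rw [List.countP_cons, List.countP_cons, List.count_cons, ih]
    simp only [decide_eq_true_eq, beq_iff_eq]
    split_ifs <;> omega

lemma even_cnt (L : List ℕ) (hDn : ∀ m : ℕ, Even m → Even (L.count m)) :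
    ∀ b, Even (L.countP (fun x => decide (x % 2 = 0 ∧ x < b))) := by
  intro b
  induction b with
  | zero =>
    have h : L.countP (fun x => decide (x % 2 = 0 ∧ x < 0)) = 0 := by
      rw [List.countP_eq_zero]; intro a _; simp
    rw [h]; exact Even.zero
  | succ b ih =>
    rw [cnt_split b L]
    split_ifs with hb
    · exact ih.add (hDn b (Nat.even_iff.2 hb))
    · simpa using ih

lemma length_even {n : ℕ} (lam : List ℕ) (hsum : lam.sum = 2 * n)
    (hDn : ∀ m : ℕ, Even m → Even (lam.count m)) : lam.length % 2 = 0 := by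
  have h1 : lam.countP odP % 2 = 0 := by
    rw [countP_odd_parity, hsum]; omega
  have h3 := even_cnt lam hDn (lam.sum + 1)
  have h2 : Even (lam.countP evP) := by
    have he : lam.countP (fun x => decide (x % 2 = 0 ∧ x < lam.sum + 1)) = lam.countP evP :=
      List.countP_congr (fun x hx => by
        have := List.single_le_sum (fun y (_ : y ∈ lam) => Nat.zero_le y) x hx
        simp only [evP, decide_eq_true_eq]
        omega)
    rwa [he] at h3
  have h4 : lam.length = lam.countP odP + lam.countP evP := by
    rw [List.length_eq_countP_add_countP odP]
    congr 1
    exact List.countP_congr (fun x _ => by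
      simp only [odP, evP, decide_eq_true_eq, decide_not, Bool.not_eq_true',
        decide_eq_false_iff_not]
      omega)
  have h5 := Nat.even_iff.1 h2
  omega


lemma fval_head {len c m : ℕ} (hl : len % 2 = 0) (hm : c % 2 = 0 → m % 2 = 0) :
    fval (len + c) c m = 1 := by
  rcases Nat.mod_two_eq_zero_or_one c with h | h
  · have := hm h
    unfold fval; split_ifs <;> omega
  · unfold fval; split_ifs <;> omega

lemma core {n : ℕ} (hn : 0 < n) (lam : List ℕ)
    (hsort : lam.Pairwise (· ≥ ·))
    (hsum : lam.sum = 2 * n)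
    (hDn : ∀ m : ℕ, Even m → Even (lam.count m))
    (hgap : ∀ i : ℕ, i + 1 < lam.length → lam.getD i 0 ≤ lam.getD (i + 1) 0 + 1) :
    (∀ v, v % 2 = 1 → v ∈ svals (lam ++ [0]) →
        (svals (lam ++ [0])).countP (odB v) + 1 ≤ (svals (lam ++ [0])).countP (evB (v + 1)))
    ∧ (svals (lam ++ [0])).countP odP = lam.length / 2 := by
  obtain ⟨c0, τ0, rfl⟩ : ∃ c0 τ0, lam = c0 :: τ0 := by
    cases lam with
    | nil => simp at hsum; omega
    | cons a l => exact ⟨a, l, rfl⟩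
  obtain ⟨hN, hA⟩ := main_inv _ hsort hDn hgap _ (List.suffix_refl _) c0 τ0 rfl
  have hlev : (c0 :: τ0).length % 2 = 0 := length_even (c0 :: τ0) hsum hDn
  have hm : c0 % 2 = 0 → ((c0 :: τ0).count c0) % 2 = 0 := fun h =>
    Nat.even_iff.1 (hDn c0 (Nat.even_iff.2 h))
  have hfv : fval ((c0 :: τ0).length + c0) c0 ((c0 :: τ0).count c0) = 1 :=
    fval_head hlev hm
  have hEO : (svals ((c0 :: τ0) ++ [0])).countP evP
      = (svals ((c0 :: τ0) ++ [0])).countP odP + 1 := by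
    rw [hN, hfv]
  have hbound : ∀ v ∈ svals ((c0 :: τ0) ++ [0]), v ≤ τ0.length + 1 + c0 := by
    have hs0 : List.Pairwise (· ≥ ·) ((c0 :: τ0) ++ [0]) := sorted_append_zero hsort
    rw [List.cons_append] at hs0
    intro v hv
    rw [List.cons_append] at hv
    have := svals_le_max hs0 v hv
    simpa [List.length_append] using this
  constructor
  · intro v hv1 hv2
    rcases eq_or_ne v ((c0 :: τ0).length + c0) with hvmax | hvmax
    · simp only [List.length_cons] at hvmax
      have h1 : (svals ((c0 :: τ0) ++ [0])).countP (odB v)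
          ≤ (svals ((c0 :: τ0) ++ [0])).countP odP :=
        List.countP_mono_left (fun x _ => by
          simp only [odB, odP, decide_eq_true_eq]
          exact fun h => h.1)
      have h2 : (svals ((c0 :: τ0) ++ [0])).countP (evB (v + 1))
          = (svals ((c0 :: τ0) ++ [0])).countP evP :=
        List.countP_congr (fun x hx => by
          have := hbound x hx
          simp only [evB, evP, decide_eq_true_eq]
          omega)
      omega
    · exact hA v hv1 hv2 hvmax
  · have hlen : (svals ((c0 :: τ0) ++ [0])).length
        = (c0 :: τ0).length + 1 := by
      rw [length_svals, List.length_append, List.length_singleton]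
    have h4 : (svals ((c0 :: τ0) ++ [0])).length
        = (svals ((c0 :: τ0) ++ [0])).countP odP
          + (svals ((c0 :: τ0) ++ [0])).countP evP := by
      rw [List.length_eq_countP_add_countP odP]
      congr 1
      exact List.countP_congr (fun x _ => by
        simp only [odP, evP, decide_eq_true_eq, decide_not, Bool.not_eq_true',
          decide_eq_false_iff_not]
        omega)
    omega

end DnAux

/-- For a rigid `D_n` partition `lam` with (even) length `l`, `M = l/2`, and
symbol `(α_1, …, α_M; β_1, …, β_{M+1})` in the `D_n` theory (computed from
`lam ++ [0]`), one has `α_i ≥ β_{i+1}` for every `1 ≤ i ≤ M` (1-based entry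
`α_q` is the 0-based entry `q - 1` of `topRow (lam ++ [0])`, similarly
for `β`). -/
theorem Dn_symbol_ineq (n : ℕ) (hn : 0 < n) (lam : List ℕ) (M : ℕ)
    (hsort : lam.Pairwise (· ≥ ·))
    (hpos : ∀ x ∈ lam, 0 < x)
    (hsum : lam.sum = 2 * n)
    (hDn : ∀ m : ℕ, Even m → Even (lam.count m))
    (hgap : ∀ i : ℕ, i + 1 < lam.length → lam.getD i 0 ≤ lam.getD (i + 1) 0 + 1)
    (hrig : ∀ m : ℕ, Odd m → lam.count m ≠ 2)
    (hM : M = lam.length / 2) :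
    ∀ i : ℕ, 1 ≤ i → i ≤ M →
      (botRow (lam ++ [0])).getD i 0 ≤ (topRow (lam ++ [0])).getD (i - 1) 0 := by
  intro i hi1 hi2
  open DnAux List in
  obtain ⟨hAall, hO⟩ := DnAux.core hn lam hsort hsum hDn hgap
  have hoddeq : oddVals (lam ++ [0]) = ((svals (lam ++ [0])).filter DnAux.odP).reverse := rfl
  have heveneq : evenVals (lam ++ [0]) = ((svals (lam ++ [0])).filter DnAux.evP).reverse := rfl
  have hsortSL : (svals (lam ++ [0])).Pairwise (· > ·) :=
    DnAux.svals_sorted (DnAux.sorted_append_zero hsort)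
  have hso : (oddVals (lam ++ [0])).Pairwise (· ≤ ·) := by
    rw [hoddeq]
    have h1 := List.Pairwise.sublist
      (List.filter_sublist (p := DnAux.odP) (l := svals (lam ++ [0]))) hsortSL
    exact List.pairwise_reverse.2 (h1.imp fun h => le_of_lt h)
  have hse : (evenVals (lam ++ [0])).Pairwise (· ≤ ·) := by
    rw [heveneq]
    have h1 := List.Pairwise.sublist
      (List.filter_sublist (p := DnAux.evP) (l := svals (lam ++ [0]))) hsortSL
    exact List.pairwise_reverse.2 (h1.imp fun h => le_of_lt h)
  have hOlen : (oddVals (lam ++ [0])).length = (svals (lam ++ [0])).countP DnAux.odP := by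
    rw [hoddeq, List.length_reverse, ← List.countP_eq_length_filter]
  have hvlt : i - 1 < (oddVals (lam ++ [0])).length := by
    rw [hOlen, hO]; omega
  set v := (oddVals (lam ++ [0]))[i-1]'hvlt with hvdef
  have hvmem : v ∈ oddVals (lam ++ [0]) := List.getElem_mem hvlt
  have hvS : v ∈ svals (lam ++ [0]) ∧ DnAux.odP v = true := by
    rw [hoddeq] at hvmem
    exact List.mem_filter.1 (List.mem_reverse.1 hvmem)
  have hv1 : v % 2 = 1 := by
    have := hvS.2
    simpa [DnAux.odP] using this
  have hcnt1 : i - 1 + 1 ≤ (oddVals (lam ++ [0])).countP (fun x => decide (x ≤ v)) :=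
    countP_ge_of_sorted hso hvlt (le_refl v)
  have htr1 : (oddVals (lam ++ [0])).countP (fun x => decide (x ≤ v))
      = (svals (lam ++ [0])).countP (DnAux.odB v) := by
    rw [hoddeq, (List.reverse_perm _).countP_eq, List.countP_filter]
    exact List.countP_congr (fun x _ => by
      simp only [DnAux.odB, DnAux.odP, Bool.and_eq_true, decide_eq_true_eq]
      omega)
  have hkey := hAall v hv1 hvS.1
  have htr2 : (evenVals (lam ++ [0])).countP (fun x => decide (x ≤ v + 1))
      = (svals (lam ++ [0])).countP (DnAux.evB (v + 1)) := by
    rw [heveneq, (List.reverse_perm _).countP_eq, List.countP_filter]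
    exact List.countP_congr (fun x _ => by
      simp only [DnAux.evB, DnAux.evP, Bool.and_eq_true, decide_eq_true_eq]
      omega)
  have hc2 : i + 1 ≤ (evenVals (lam ++ [0])).countP (fun x => decide (x ≤ v + 1)) := by
    rw [htr2]; rw [htr1] at hcnt1; omega
  obtain ⟨hie, hle⟩ := getElem_le_of_countP hse hc2
  have hall : ∀ x ∈ evenVals (lam ++ [0]), x % 2 = 0 := by
    intro x hx
    rw [heveneq] at hx
    have := (List.mem_filter.1 (List.mem_reverse.1 hx)).2
    simpa [DnAux.evP] using this
  have heP : (evenVals (lam ++ [0]))[i] % 2 = 0 := hall _ (List.getElem_mem hie)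
  have hbot : (botRow (lam ++ [0])).getD i 0 = (evenVals (lam ++ [0]))[i] / 2 - i := by
    have hlb : i < (botRow (lam ++ [0])).length := by
      simpa [botRow, List.length_mapIdx] using hie
    rw [List.getD_eq_getElem _ _ hlb]
    simp [botRow, List.getElem_mapIdx]
  have htop : (topRow (lam ++ [0])).getD (i-1) 0 = (v - 1) / 2 - (i - 1) := by
    have hlb : i - 1 < (topRow (lam ++ [0])).length := by
      simpa [topRow, List.length_mapIdx] using hvlt
    rw [List.getD_eq_getElem _ _ hlb]
    simp [topRow, List.getElem_mapIdx, hvdef]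
  rw [hbot, htop]
  omega
end
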